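/- Identify S³ with the unit sphere in ℂ², g = {(z,w) ∈ S³ : z, w ∈ ℝ}, and φ(z,w) = (e^{2πi/q} z, e^{2πip/q} w) with q even and gcd(p,q) = 1 (so p is odd). Let g' = {(e^{iπ/q} s, e^{ipπ/q} t) : s, t ∈ ℝ, s² + t² = 1}. Then the orbits ⋃ₖ φᵏ(g) and ⋃ₖ φᵏ(g') are disjoint. -/

import Mathlib

open Real

noncomputable section

abbrev EC := EuclideanSpace ℂ (Fin 2)

def S3c : Set EC := Metric.sphere 0 1

def mk2 (a b : ℂ) : EC := (WithLp.equiv 2 (Fin 2 → ℂ)).symm ![a, b]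

def phi (p q : ℤ) (v : EC) : EC :=
  mk2 (Complex.exp (2 * (π : ℂ) * Complex.I / (q : ℂ)) * v 0)
      (Complex.exp (2 * (π : ℂ) * Complex.I * (p : ℂ) / (q : ℂ)) * v 1)

def gReal : Set EC := {v ∈ S3c | (v 0).im = 0 ∧ (v 1).im = 0}

/-- The great circle `g' = {(e^{iπ/q} s, e^{ipπ/q} t) : s, t ∈ ℝ, s² + t² = 1}`. -/
def gRot (p q : ℤ) : Set EC :=
  {v | ∃ s t : ℝ, s ^ 2 + t ^ 2 = 1 ∧
    v 0 = Complex.exp ((π : ℂ) * Complex.I / (q : ℂ)) * (s : ℂ) ∧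
    v 1 = Complex.exp ((p : ℂ) * (π : ℂ) * Complex.I / (q : ℂ)) * (t : ℂ)}

lemma sin_aux (q : ℤ) (hq : 1 ≤ q) (hqe : Even q) (d : ℤ) (hd : Odd d) :
    Real.sin (π * d / q) ≠ 0 := by
  intro h
  rw [Real.sin_eq_zero_iff] at h
  obtain ⟨n, hn⟩ := h
  have hq0 : (q : ℝ) ≠ 0 := by
    have : (0:ℝ) < q := by exact_mod_cast hq
    linarith
  have h2 : ((n * q : ℤ) : ℝ) = (d : ℤ) := by
    have hπ : (π : ℝ) ≠ 0 := Real.pi_ne_zero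
    field_simp at hn
    have h4 : ((n * q : ℤ) : ℝ) * π = ((d : ℤ) : ℝ) * π := by push_cast; linear_combination π * hn
    exact mul_right_cancel₀ hπ h4
  have h3 : n * q = d := by exact_mod_cast h2
  have : Even d := h3 ▸ hqe.mul_left n
  exact ((Int.not_odd_iff_even.mpr this)) hd

lemma im_aux (q : ℤ) (hq : 1 ≤ q) (hqe : Even q) (d : ℤ) (hd : Odd d) (a s : ℝ)
    (hs : s ≠ 0)
    (h : (a : ℂ) = Complex.exp (((π * d / q : ℝ) : ℂ) * Complex.I) * (s : ℂ)) :
    False := by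
  have him := congrArg Complex.im h
  rw [Complex.ofReal_im, Complex.mul_im, Complex.ofReal_im, Complex.ofReal_re,
    Complex.exp_ofReal_mul_I_im, mul_zero, zero_add] at him
  rcases mul_eq_zero.mp him.symm with h1 | h1
  · exact sin_aux q hq hqe d hd h1
  · exact hs h1

lemma iter0 (p q : ℤ) (k : ℕ) (v : EC) :
    (phi p q)^[k] v 0 = Complex.exp (2 * (π:ℂ) * Complex.I / q) ^ k * v 0 := by
  induction k with
  | zero => simp
  | succ n ih =>
      rw [Function.iterate_succ_apply']
      show Complex.exp (2 * (π:ℂ) * Complex.I / q) * ((phi p q)^[n] v 0) = _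
      rw [ih, pow_succ]; ring

lemma iter1 (p q : ℤ) (k : ℕ) (v : EC) :
    (phi p q)^[k] v 1 = Complex.exp (2 * (π:ℂ) * Complex.I * p / q) ^ k * v 1 := by
  induction k with
  | zero => simp
  | succ n ih =>
      rw [Function.iterate_succ_apply']
      show Complex.exp (2 * (π:ℂ) * Complex.I * p / q) * ((phi p q)^[n] v 1) = _
      rw [ih, pow_succ]; ring

/-- For `q` even, `p` odd, `gcd(p,q) = 1`, the `φ`-orbit of the real great
circle `g` and the `φ`-orbit of `g'` are disjoint. -/
theorem orbits_disjoint (p q : ℤ) (hq : 1 ≤ q) (hqe : Even q) (hpo : Odd p)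
    (hpq : Int.gcd p q = 1) :
    Disjoint (⋃ k : ℕ, (phi p q)^[k] '' gReal)
      (⋃ k : ℕ, (phi p q)^[k] '' gRot p q) := by
  rw [Set.disjoint_left]
  rintro v hv1 hv2
  simp only [Set.mem_iUnion, Set.mem_image] at hv1 hv2
  obtain ⟨k, u, ⟨_, h0, h1⟩, rfl⟩ := hv1
  obtain ⟨m, w, ⟨s, t, hst, hw0, hw1⟩, hvw⟩ := hv2
  have hqC : (q : ℂ) ≠ 0 := by
    have : (0:ℤ) < q := hq
    exact_mod_cast this.ne'
  have hu0 : u 0 = ((u 0).re : ℂ) := by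
    rw [← Complex.re_add_im (u 0), h0]; simp
  have hu1 : u 1 = ((u 1).re : ℂ) := by
    rw [← Complex.re_add_im (u 1), h1]; simp
  have hst' : s ≠ 0 ∨ t ≠ 0 := by
    by_contra hc
    push_neg at hc
    rw [hc.1, hc.2] at hst; norm_num at hst
  rcases hst' with hs | ht
  · -- use coordinate 0
    have e0 := congrArg (fun f : EC => f 0) hvw
    simp only at e0
    rw [iter0, iter0, hw0, hu0] at e0
    -- e0 : exp(X)^k * a = exp(X)^m * (exp(πI/q) * s)
    set X : ℂ := 2 * (π:ℂ) * Complex.I / q with hX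
    set d : ℤ := 2 * (m:ℤ) + 1 - 2 * k with hd
    have key : (((u 0).re : ℝ) : ℂ) =
        Complex.exp (((π * d / q : ℝ) : ℂ) * Complex.I) * (s : ℂ) := by
      have harg : (((π * d / q : ℝ) : ℂ) * Complex.I) =
          (m : ℂ) * X + (π:ℂ) * Complex.I / q - (k : ℂ) * X := by
        rw [hX]; push_cast [hd]; field_simp
      rw [harg, Complex.exp_sub, Complex.exp_add]
      rw [← Complex.exp_nat_mul, ← Complex.exp_nat_mul] at e0
      field_simp
      rw [mul_comm X (k:ℂ)]
      linear_combination -e0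
    exact im_aux q hq hqe d ⟨(m:ℤ) - k, by rw [hd]; ring⟩ _ s hs key
  · -- use coordinate 1
    have e1 := congrArg (fun f : EC => f 1) hvw
    simp only at e1
    rw [iter1, iter1, hw1, hu1] at e1
    set X : ℂ := 2 * (π:ℂ) * Complex.I * p / q with hX
    set d : ℤ := p * (2 * (m:ℤ) + 1 - 2 * k) with hd
    have key : (((u 1).re : ℝ) : ℂ) =
        Complex.exp (((π * d / q : ℝ) : ℂ) * Complex.I) * (t : ℂ) := by
      have harg : (((π * d / q : ℝ) : ℂ) * Complex.I) =
          (m : ℂ) * X + (p:ℂ) * (π:ℂ) * Complex.I / q - (k : ℂ) * X := by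
        rw [hX]; push_cast [hd]; field_simp
      rw [harg, Complex.exp_sub, Complex.exp_add]
      rw [← Complex.exp_nat_mul, ← Complex.exp_nat_mul] at e1
      field_simp
      rw [mul_comm X (k:ℂ)]
      linear_combination -e1
    exact im_aux q hq hqe d (hpo.mul ⟨(m:ℤ) - k, by ring⟩) _ t ht key
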